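/- Let R be a finite reduced crystallographic root system with a fixed base S of simple roots, let I ⊆ S, and let α ∈ S \ I. Then ∑_{β ∈ R⁺ \ R_I} ⟨β, α∨⟩ > 0; that is, the coefficient b_α of the colour divisor D_α in the anticanonical divisor of the corresponding flag variety is a positive integer. -/

import Mathlib

open scoped RealInnerProductSpace Classical

noncomputable section

/-- The crystallographic pairing `⟨β, α∨⟩ = 2(β,α)/(α,α)`. -/
def cpair {V : Type*} [NormedAddCommGroup V] [InnerProductSpace ℝ V] (β α : V) : ℝ :=
  2 * ⟪β, α⟫ / ⟪α, α⟫

/-- A finite reduced crystallographic root system `R` in a real inner product space,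
together with a fixed base `S` of simple roots. -/
structure RootSystemWithBase (V : Type*) [NormedAddCommGroup V] [InnerProductSpace ℝ V] where
  /-- The (finite) set of roots. -/
  R : Finset V
  /-- The base of simple roots. -/
  S : Finset V
  S_subset : S ⊆ R
  zero_not_mem : (0 : V) ∉ R
  /-- `R` is stable under the reflection associated to each root. -/
  reflect_mem : ∀ α ∈ R, ∀ β ∈ R, β - cpair β α • α ∈ R
  /-- The root system is crystallographic: all pairings are integers. -/
  crystallographic : ∀ α ∈ R, ∀ β ∈ R, ∃ n : ℤ, cpair β α = (n : ℝ)
  /-- The root system is reduced: the only multiples of a root that are roots are `±` itself. -/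
  reduced : ∀ α ∈ R, ∀ t : ℝ, t • α ∈ R → t = 1 ∨ t = -1
  /-- The simple roots are linearly independent. -/
  indep : LinearIndependent ℝ (fun s : S => (s : V))
  /-- Every root is a nonnegative or nonpositive integer combination of simple roots. -/
  base_expand : ∀ β ∈ R, β ∈ AddSubmonoid.closure (S : Set V) ∨
    -β ∈ AddSubmonoid.closure (S : Set V)

namespace RootSystemWithBase

variable {V : Type*} [NormedAddCommGroup V] [InnerProductSpace ℝ V]

/-- The positive roots `R⁺` determined by the base `S`. -/
def posRoots (P : RootSystemWithBase V) : Finset V :=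
  P.R.filter (fun β => β ∈ AddSubmonoid.closure (P.S : Set V))

/-- For `I ⊆ S`, the set `R_I` of roots lying in the `ℤ`-span of `I`. -/
def rootsIn (P : RootSystemWithBase V) (I : Finset V) : Finset V :=
  P.R.filter (fun β => β ∈ Submodule.span ℤ (I : Set V))

/-- The root system is irreducible: it is not the orthogonal direct sum of two nonempty
root subsystems (equivalently, its Dynkin diagram is connected). -/
def IsIrreducible (P : RootSystemWithBase V) : Prop :=
  ∀ R₁ R₂ : Finset V, R₁ ∪ R₂ = P.R → R₁.Nonempty → R₂.Nonempty →
    (∀ a ∈ R₁, ∀ b ∈ R₂, ⟪a, b⟫ = 0) → False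

end RootSystemWithBase

open RootSystemWithBase


section AuxCpair

variable {V : Type*} [NormedAddCommGroup V] [InnerProductSpace ℝ V]

lemma cpair_sub_left (x y α : V) : cpair (x - y) α = cpair x α - cpair y α := by
  unfold cpair; rw [inner_sub_left]; ring

lemma cpair_smul_left (c : ℝ) (x α : V) : cpair (c • x) α = c * cpair x α := by
  unfold cpair; rw [real_inner_smul_left]; ring

lemma cpair_self {α : V} (h : α ≠ 0) : cpair α α = 2 := by
  have : ⟪α, α⟫ ≠ 0 := fun hz => h (inner_self_eq_zero.mp hz)
  unfold cpair; field_simp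

end AuxCpair

/-- If `I ⊆ S` and `α ∈ S \ I`, then
`∑_{β ∈ R⁺ \ R_I} ⟨β, α∨⟩ > 0`, i.e. the coefficient `b_α` of the colour divisor `D_α` in the
anticanonical divisor of the corresponding flag variety is a positive integer. -/
theorem anticanonical_coefficient_pos {V : Type*} [NormedAddCommGroup V] [InnerProductSpace ℝ V]
    (P : RootSystemWithBase V) (I : Finset V) (hI : I ⊆ P.S) (α : V) (hα : α ∈ P.S \ I) :
    0 < ∑ β ∈ P.posRoots \ P.rootsIn I, cpair β α := by
  classical
  obtain ⟨hαS, hαI⟩ := Finset.mem_sdiff.mp hα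
  have hαR : α ∈ P.R := P.S_subset hαS
  have hα0 : α ≠ 0 := fun h => P.zero_not_mem (h ▸ hαR)
  -- Construct coordinate functionals on V dual to the simple roots.
  set W : Submodule ℝ V := Submodule.span ℝ (Set.range fun s : P.S => (s : V)) with hWdef
  obtain ⟨W', hcompl⟩ := Submodule.exists_isCompl W
  set b : Module.Basis P.S ℝ W := Module.Basis.span P.indep with hbdef
  set π : V →ₗ[ℝ] W := W.linearProjOfIsCompl W' hcompl with hπdef
  set ℓ : P.S → V →ₗ[ℝ] ℝ := fun s => (b.coord s).comp π with hℓdef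
  have hmemW : ∀ s ∈ P.S, (s : V) ∈ W := fun s hs =>
    Submodule.subset_span ⟨⟨s, hs⟩, rfl⟩
  have hπeq : ∀ v (hv : v ∈ W), π v = ⟨v, hv⟩ := fun v hv =>
    Submodule.linearProjOfIsCompl_apply_left hcompl ⟨v, hv⟩
  have hE1 : ∀ s t : P.S, ℓ s (t : V) = if t = s then 1 else 0 := by
    intro s t
    have hb : ((b t : W) : V) = (t : V) := congrArg Subtype.val (Module.Basis.span_apply P.indep t)
    have hpt : π (t : V) = b t := by
      rw [hπeq (t : V) (hmemW t t.2)]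
      exact Subtype.ext hb.symm
    simp [hℓdef, hpt, Module.Basis.coord_apply, Module.Basis.repr_self, Finsupp.single_apply]
  have hE3 : ∀ v ∈ W, (∀ s : P.S, ℓ s v = 0) → v = 0 := by
    intro v hv h0
    have hpv : π v = ⟨v, hv⟩ := hπeq v hv
    have hz : ∀ s : P.S, b.coord s (⟨v, hv⟩ : W) = 0 := by
      intro s
      have := h0 s
      rw [hℓdef] at this
      simpa [hpv] using this
    have : (⟨v, hv⟩ : W) = 0 := b.forall_coord_eq_zero_iff.mp hz
    simpa using congrArg (Subtype.val) this
  have hclW : ∀ v ∈ AddSubmonoid.closure (P.S : Set V), v ∈ W := by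
    intro v hv
    have hle : AddSubmonoid.closure (P.S : Set V) ≤ W.toAddSubmonoid :=
      AddSubmonoid.closure_le.mpr (fun x hx => hmemW x hx)
    exact hle hv
  have hE2 : ∀ s : P.S, ∀ v ∈ AddSubmonoid.closure (P.S : Set V), 0 ≤ ℓ s v := by
    intro s v hv
    induction hv using AddSubmonoid.closure_induction with
    | mem x hx =>
        rw [show x = ((⟨x, hx⟩ : P.S) : V) from rfl, hE1]
        split <;> norm_num
    | zero => simp
    | add x y _ _ ihx ihy => rw [map_add]; positivity
  have hℓα_self : ℓ ⟨α, hαS⟩ α = 1 := by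
    have := hE1 ⟨α, hαS⟩ ⟨α, hαS⟩
    simpa using this
  have hℓs_α : ∀ s : P.S, (s : V) ≠ α → ℓ s α = 0 := by
    intro s hs
    have h2 := hE1 s ⟨α, hαS⟩
    rw [if_neg (fun h : (⟨α, hαS⟩ : P.S) = s => hs (by simpa using congrArg Subtype.val h.symm))] at h2
    exact h2
  have hℓI : ∀ v ∈ Submodule.span ℤ (I : Set V), ℓ ⟨α, hαS⟩ v = 0 := by
    intro v hv
    induction hv using Submodule.span_induction with
    | mem x hx =>
        have hxI : x ∈ I := hx
        have hxS : x ∈ P.S := hI hxI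
        have hne : x ≠ α := fun h => hαI (h ▸ hxI)
        have := hE1 ⟨α, hαS⟩ ⟨x, hxS⟩
        rwa [if_neg (fun h => hne (Subtype.ext_iff.mp h))] at this
    | zero => simp
    | add x y _ _ ihx ihy => rw [map_add, ihx, ihy]; ring
    | smul n x _ ih => rw [map_zsmul, ih]; simp
  -- any positive root ≠ α has a positive coordinate outside α
  have hcoordpos : ∀ β ∈ P.posRoots, β ≠ α → ∃ s : P.S, (s : V) ≠ α ∧ 0 < ℓ s β := by
    intro β hβ hne
    obtain ⟨hβR, hβcl⟩ := Finset.mem_filter.mp hβ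
    by_contra hcon
    push_neg at hcon
    have hz : ∀ s : P.S, (s : V) ≠ α → ℓ s β = 0 := fun s hs =>
      le_antisymm (hcon s hs) (hE2 s β hβcl)
    have hu : β - (ℓ ⟨α, hαS⟩ β) • α = 0 := by
      refine hE3 _ (Submodule.sub_mem _ (hclW β hβcl)
        (Submodule.smul_mem _ _ (hmemW α hαS))) ?_
      intro s
      by_cases hs : (s : V) = α
      · have hss : s = ⟨α, hαS⟩ := Subtype.ext hs
        rw [hss, map_sub, map_smul, hℓα_self]
        simp
      · rw [map_sub, map_smul, hz s hs, hℓs_α s hs]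
        simp
    have hβt : β = (ℓ ⟨α, hαS⟩ β) • α := by
      have := sub_eq_zero.mp hu
      exact this
    rcases P.reduced α hαR _ (hβt ▸ hβR) with h1 | h2
    · exact hne (by rw [hβt, h1, one_smul])
    · have hge : 0 ≤ ℓ ⟨α, hαS⟩ β := hE2 _ β hβcl
      rw [h2] at hge; linarith
  -- the reflection in α of a positive root ≠ α is positive
  have hrefl : ∀ β ∈ P.posRoots, β ≠ α → β - cpair β α • α ∈ P.posRoots := by
    intro β hβ hne
    obtain ⟨hβR, hβcl⟩ := Finset.mem_filter.mp hβ
    have hγR : β - cpair β α • α ∈ P.R := P.reflect_mem α hαR β hβR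
    refine Finset.mem_filter.mpr ⟨hγR, ?_⟩
    rcases P.base_expand _ hγR with h | h
    · exact h
    · exfalso
      obtain ⟨s, hsne, hspos⟩ := hcoordpos β hβ hne
      have h1 : ℓ s (β - cpair β α • α) = ℓ s β := by
        rw [map_sub, map_smul, hℓs_α s hsne]; simp
      have h2 : 0 ≤ ℓ s (-(β - cpair β α • α)) := hE2 s _ h
      rw [map_neg, h1] at h2
      linarith
  have hαpos : α ∈ P.posRoots :=
    Finset.mem_filter.mpr ⟨hαR, AddSubmonoid.subset_closure hαS⟩
  have hαnotI : α ∉ P.rootsIn I := by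
    intro h
    have := hℓI α (Finset.mem_filter.mp h).2
    rw [hℓα_self] at this; norm_num at this
  have hcα : cpair α α = 2 := cpair_self hα0
  have hpair : ∀ β : V, cpair (β - cpair β α • α) α = -cpair β α := by
    intro β
    rw [cpair_sub_left, cpair_smul_left, hcα]; ring
  have hginv : ∀ β : V,
      (β - cpair β α • α) - cpair (β - cpair β α • α) α • α = β := by
    intro β
    rw [hpair β]
    module
  set T : Finset V := P.posRoots \ P.rootsIn I with hT
  have hαT : α ∈ T := Finset.mem_sdiff.mpr ⟨hαpos, hαnotI⟩
  rw [← Finset.add_sum_erase _ _ hαT]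
  set T' : Finset V := T.erase α with hT'
  rw [← Finset.sum_filter_add_sum_filter_not T' (fun β => β - cpair β α • α ∈ T')]
  have hA : ∑ β ∈ T'.filter (fun β => β - cpair β α • α ∈ T'), cpair β α = 0 := by
    refine Finset.sum_involution (fun β _ => β - cpair β α • α) ?_ ?_ ?_ ?_
    · intro a ha
      rw [hpair a]; ring
    · intro a ha hfa hcontra
      apply hfa
      have hc' : a - cpair a α • α = a := hcontra
      have : cpair a α • α = 0 := sub_eq_self.mp hc'
      rcases smul_eq_zero.mp this with h | h
      · exact h
      · exact absurd h hα0
    · intro a ha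
      obtain ⟨haT', haq⟩ := Finset.mem_filter.mp ha
      refine Finset.mem_filter.mpr ⟨haq, ?_⟩
      rw [hginv a]
      exact haT'
    · intro a ha
      exact hginv a
  have hB : 0 ≤ ∑ β ∈ T'.filter (fun β => ¬(β - cpair β α • α ∈ T')), cpair β α := by
    refine Finset.sum_nonneg ?_
    intro β hβf
    obtain ⟨hβT', hβq⟩ := Finset.mem_filter.mp hβf
    have hβα : β ≠ α := Finset.ne_of_mem_erase hβT'
    have hβT : β ∈ T := Finset.mem_of_mem_erase hβT'
    obtain ⟨hβpos, hβnotI⟩ := Finset.mem_sdiff.mp hβT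
    have hβcl : β ∈ AddSubmonoid.closure (P.S : Set V) :=
      (Finset.mem_filter.mp hβpos).2
    have hγpos : β - cpair β α • α ∈ P.posRoots := hrefl β hβpos hβα
    by_cases hγα : β - cpair β α • α = α
    · exfalso
      -- then cpair β α = -2 and β = -α, contradicting positivity of β
      have h2 : cpair (β - cpair β α • α) α = 2 := by rw [hγα, hcα]
      rw [hpair β] at h2
      have hc : cpair β α = -2 := by linarith
      have hβeq : β = -α := by
        have := hγα
        rw [hc] at this
        linear_combination (norm := module) this
      have := hE2 ⟨α, hαS⟩ β hβcl
      rw [hβeq, map_neg, hℓα_self] at this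
      linarith
    · have hγnotT : β - cpair β α • α ∉ T := fun h =>
        hβq (Finset.mem_erase.mpr ⟨hγα, h⟩)
      have hγI : β - cpair β α • α ∈ P.rootsIn I := by
        by_contra h
        exact hγnotT (Finset.mem_sdiff.mpr ⟨hγpos, h⟩)
      have hγ0 : ℓ ⟨α, hαS⟩ (β - cpair β α • α) = 0 :=
        hℓI _ (Finset.mem_filter.mp hγI).2
      rw [map_sub, map_smul, hℓα_self, smul_eq_mul, mul_one] at hγ0
      have hge : 0 ≤ ℓ ⟨α, hαS⟩ β := hE2 _ β hβcl
      have hc : cpair β α = ℓ ⟨α, hαS⟩ β := by linarith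
      have hcne : cpair β α ≠ 0 := by
        intro h0
        apply hβnotI
        have : β - cpair β α • α = β := by rw [h0]; simp
        rw [this] at hγI
        exact hγI
      rcases lt_or_eq_of_le hge with h | h
      · rw [hc]; linarith
      · exfalso; exact hcne (by rw [hc, ← h])
  rw [hA, hcα]
  linarith
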